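/- Let T be a power bounded operator on a normed space X and let D ⊆ X be a dense subset such that liminf_{n→∞} |f(T^n y)| = 0 for every y ∈ D and every f ∈ X*. Then liminf_{n→∞} |f(T^n x)| = 0 for every x ∈ X and every f ∈ X*, i.e., T is weakly quasistable. -/
import Mathlib


/-- If `T` is a power bounded operator on a normed space `X` and `D ⊆ X` is a dense
subset with `liminf_n |f(T^n y)| = 0` for every `y ∈ D` and every `f ∈ X*`, then
`liminf_n |f(T^n x)| = 0` for every `x ∈ X` and every `f ∈ X*`, i.e. `T` is weakly
quasistable. -/
theorem weakly_quasistable_of_dense {𝕜 X : Type*} [RCLike 𝕜]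
    [NormedAddCommGroup X] [NormedSpace 𝕜 X] (T : X →L[𝕜] X)
    (hpb : ∃ C : ℝ, ∀ n : ℕ, ‖T ^ n‖ ≤ C) (D : Set X) (hD : Dense D)
    (h : ∀ y ∈ D, ∀ f : X →L[𝕜] 𝕜,
      Filter.liminf (fun n : ℕ => ‖f ((T ^ n) y)‖) Filter.atTop = 0) :
    ∀ (x : X) (f : X →L[𝕜] 𝕜),
      Filter.liminf (fun n : ℕ => ‖f ((T ^ n) x)‖) Filter.atTop = 0 := by
  obtain ⟨C, hC⟩ := hpb
  have hC0 : 0 ≤ C := le_trans (norm_nonneg _) (hC 0)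
  intro x f
  -- boundedness facts
  have hbdd : ∀ z : X, Filter.IsBoundedUnder (· ≤ ·) Filter.atTop
      (fun n : ℕ => ‖f ((T ^ n) z)‖) := by
    intro z
    refine Filter.isBoundedUnder_of ⟨‖f‖ * (C * ‖z‖), fun n => ?_⟩
    calc ‖f ((T ^ n) z)‖ ≤ ‖f‖ * ‖(T ^ n) z‖ := f.le_opNorm _
      _ ≤ ‖f‖ * (C * ‖z‖) := by
          refine mul_le_mul_of_nonneg_left ?_ (norm_nonneg f)
          calc ‖(T ^ n) z‖ ≤ ‖T ^ n‖ * ‖z‖ := (T ^ n).le_opNorm _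
            _ ≤ C * ‖z‖ := mul_le_mul_of_nonneg_right (hC n) (norm_nonneg z)
  have hbddb : ∀ z : X, Filter.IsBoundedUnder (· ≥ ·) Filter.atTop
      (fun n : ℕ => ‖f ((T ^ n) z)‖) :=
    fun z => Filter.isBoundedUnder_of ⟨0, fun n => norm_nonneg _⟩
  have hnonneg : 0 ≤ Filter.liminf (fun n : ℕ => ‖f ((T ^ n) x)‖) Filter.atTop :=
    Filter.le_liminf_of_le (hbdd x).isCoboundedUnder_ge
      (Filter.Eventually.of_forall fun (n : ℕ) => norm_nonneg _)
  refine le_antisymm ?_ hnonneg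
  -- show liminf ≤ ε for all ε > 0
  refine le_of_forall_pos_lt_add fun ε hε => ?_
  rw [zero_add]
  obtain ⟨y, hyD, hyx⟩ : ∃ y ∈ D, ‖x - y‖ < ε / (‖f‖ * C + 1) := by
    have := hD
    rw [Metric.dense_iff] at this
    obtain ⟨y, hy1, hy2⟩ := this x (ε / (‖f‖ * C + 1))
      (div_pos hε (by positivity))
    exact ⟨y, hy2, by rw [Metric.mem_ball, dist_eq_norm] at hy1; rwa [norm_sub_rev]⟩
  set δ := ‖f‖ * C * ‖x - y‖ with hδ
  have hδε : δ < ε := by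
    have h1 : ‖f‖ * C ≤ ‖f‖ * C + 1 := by linarith
    calc δ ≤ (‖f‖ * C + 1) * ‖x - y‖ :=
          mul_le_mul_of_nonneg_right h1 (norm_nonneg _)
      _ < (‖f‖ * C + 1) * (ε / (‖f‖ * C + 1)) := by
          exact mul_lt_mul_of_pos_left hyx (by positivity)
      _ = ε := by field_simp
  have key : ∀ n : ℕ, ‖f ((T ^ n) x)‖ ≤ ‖f ((T ^ n) y)‖ + δ := by
    intro n
    have : ‖f ((T ^ n) x) - f ((T ^ n) y)‖ ≤ δ := by
      rw [← map_sub, ← map_sub]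
      calc ‖f ((T ^ n) (x - y))‖ ≤ ‖f‖ * ‖(T ^ n) (x - y)‖ := f.le_opNorm _
        _ ≤ ‖f‖ * (C * ‖x - y‖) := by
            refine mul_le_mul_of_nonneg_left ?_ (norm_nonneg f)
            calc ‖(T ^ n) (x - y)‖ ≤ ‖T ^ n‖ * ‖x - y‖ := (T ^ n).le_opNorm _
              _ ≤ C * ‖x - y‖ := mul_le_mul_of_nonneg_right (hC n) (norm_nonneg _)
        _ = δ := by ring
    calc ‖f ((T ^ n) x)‖ ≤ ‖f ((T ^ n) y)‖ + ‖f ((T ^ n) x) - f ((T ^ n) y)‖ :=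
          norm_le_insert' _ _
      _ ≤ ‖f ((T ^ n) y)‖ + δ := by linarith
  calc Filter.liminf (fun n : ℕ => ‖f ((T ^ n) x)‖) Filter.atTop
      ≤ Filter.liminf (fun n : ℕ => ‖f ((T ^ n) y)‖ + δ) Filter.atTop := by
        refine Filter.liminf_le_liminf (Filter.Eventually.of_forall key) (hbddb x) ?_
        exact (Filter.isBoundedUnder_le_add (hbdd y) (Filter.isBoundedUnder_const)).isCoboundedUnder_ge
    _ = Filter.liminf (fun n : ℕ => ‖f ((T ^ n) y)‖) Filter.atTop + δ := by
        exact liminf_add_const Filter.atTop _ δ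
          (hbdd y).isCoboundedUnder_ge (hbddb y)
    _ = δ := by rw [h y hyD f, zero_add]
    _ < ε := hδε
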